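/- For distinct primes p and q, the height of the product Φ_{pq}(x)·Φ_{q²}(x) satisfies 1 ≤ H(Φ_{pq}·Φ_{q²}) ≤ p−1. -/

import Mathlib

open Polynomial

noncomputable def Height (f : Polynomial ℤ) : ℕ :=
  f.support.sup fun i => (f.coeff i).natAbs

noncomputable def Tsum (f : Polynomial ℤ) : ℕ :=
  ∑ i ∈ f.support, (f.coeff i).natAbs

noncomputable def B (n : ℕ) : ℕ :=
  sSup {h : ℕ | ∃ f : Polynomial ℤ, f ∣ X ^ n - 1 ∧ Height f = h}

namespace Stmt9Aux

/-- `g p q r k = (k - p * ((k*r) % q)) / q` -/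
def g (p q r : ℕ) (k : ℤ) : ℤ := (k - p * ((k * r) % q)) / q

def Nf (p q r : ℕ) (k : ℤ) : ℤ := min q (max 0 (g p q r k + 1))

def cf (p q r : ℕ) (k : ℕ) : ℤ := Nf p q r k - Nf p q r ((k : ℤ) - 1)

noncomputable def Qp (p q r : ℕ) : Polynomial ℤ :=
  ∑ k ∈ Finset.range ((p + q) * q), C (cf p q r k) * X ^ k

section

variable {p q r s : ℕ} (hp2 : 2 ≤ p) (hq2 : 2 ≤ q) (hr1 : 1 ≤ r) (hrq : r < q)
  (hs : p * r = q * s + 1)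

include hq2 in
lemma hq0 : (0 : ℤ) < q := by exact_mod_cast Nat.lt_of_lt_of_le Nat.zero_lt_two hq2

include hs in
lemma dvd_g (k : ℤ) : (q : ℤ) ∣ (k - p * ((k * r) % q)) := by
  have hZ : (p : ℤ) * r = q * s + 1 := by exact_mod_cast hs
  have h1 : (k * r) % q = k * r - q * ((k * r) / q) := by rw [Int.emod_def]
  refine ⟨-(s * k) + p * ((k * r) / q), ?_⟩
  rw [h1]
  linear_combination (-k) * hZ

include hs in
lemma gq (k : ℤ) : (q : ℤ) * g p q r k = k - p * ((k * r) % q) :=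
  Int.mul_ediv_cancel' (dvd_g hs k)

include hq2 hr1 hrq hs in
lemma g_diff (k : ℤ) :
    g p q r k - g p q r (k - 1) = -s ∨ g p q r k - g p q r (k - 1) = p - s := by
  have hq0' : (0 : ℤ) < q := hq0 hq2
  have hZ : (p : ℤ) * r = q * s + 1 := by exact_mod_cast hs
  set A := (k * r) % (q : ℤ) with hA
  set B := ((k - 1) * r) % (q : ℤ) with hB
  have hA0 : 0 ≤ A := Int.emod_nonneg _ (ne_of_gt hq0')
  have hAq : A < q := Int.emod_lt_of_pos _ hq0'
  have hB0 : 0 ≤ B := Int.emod_nonneg _ (ne_of_gt hq0')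
  have hBq : B < q := Int.emod_lt_of_pos _ hq0'
  have hr1' : (1 : ℤ) ≤ r := by exact_mod_cast hr1
  have hrq' : (r : ℤ) < q := by exact_mod_cast hrq
  obtain ⟨m, hm⟩ : ∃ m : ℤ, B - (A - r) = q * m := by
    refine ⟨(k * r) / q - ((k - 1) * r) / q, ?_⟩
    have e1 : A = k * r - q * ((k * r) / q) := by rw [hA, Int.emod_def]
    have e2 : B = (k - 1) * r - q * (((k - 1) * r) / q) := by rw [hB, Int.emod_def]
    rw [e1, e2]; ring
  have hm01 : m = 0 ∨ m = 1 := by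
    have h1 : q * m < q * 2 := by nlinarith
    have h2 : q * (-1) < q * m := by nlinarith
    have := lt_of_mul_lt_mul_left h1 hq0'.le
    have := lt_of_mul_lt_mul_left h2 hq0'.le
    omega
  have e1 := gq hs k
  have e2 := gq hs (k - 1)
  have hD : (q : ℤ) * (g p q r k - g p q r (k - 1)) = q * (-s + p * m) := by
    rw [← hA] at e1; rw [← hB] at e2
    linear_combination e1 - e2 + p * hm - hZ
  have hD' := mul_left_cancel₀ (ne_of_gt hq0') hD
  rcases hm01 with h | h <;> [left; right] <;> rw [hD'] <;> rw [h] <;> ring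

include hp2 hq2 hr1 hrq hs in
lemma cf_bound (hs1 : 1 ≤ s) (hsp : s < p) (k : ℕ) :
    (cf p q r k).natAbs ≤ p - 1 := by
  rcases g_diff hq2 hr1 hrq hs (k : ℤ) with h | h <;>
  · unfold cf Nf
    omega

include hp2 hq2 hs in
lemma cf_zero (k : ℕ) (hk : (p + q) * q ≤ k) : cf p q r k = 0 := by
  have hq0' : (0 : ℤ) < q := hq0 hq2
  have hp0 : (0 : ℤ) < p := by exact_mod_cast Nat.lt_of_lt_of_le Nat.zero_lt_two hp2
  have key : ∀ a : ℤ, ((p : ℤ) + q) * q - 1 ≤ a → (q : ℤ) ≤ g p q r a := by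
    intro a ha
    have e := gq hs a
    have hA0 : 0 ≤ (a * r) % (q : ℤ) := Int.emod_nonneg _ (ne_of_gt hq0')
    have hAq : (a * r) % (q : ℤ) < q := Int.emod_lt_of_pos _ hq0'
    have h1 : (q : ℤ) * (q - 1) < q * g p q r a := by nlinarith
    have := lt_of_mul_lt_mul_left h1 hq0'.le
    omega
  have hk' : ((p : ℤ) + q) * q ≤ (k : ℤ) := by exact_mod_cast hk
  have h1 := key (k : ℤ) (by omega)
  have h2 := key ((k : ℤ) - 1) (by omega)
  unfold cf Nf
  omega

include hq2 hs in
lemma Nf_neg (k : ℤ) (hk : k < 0) : Nf p q r k = 0 := by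
  have hq0' : (0 : ℤ) < q := hq0 hq2
  have hp0 : (0 : ℤ) ≤ p := by positivity
  have e := gq hs k
  have hA0 : 0 ≤ (k * r) % (q : ℤ) := Int.emod_nonneg _ (ne_of_gt hq0')
  have hg : g p q r k < 0 := by nlinarith
  unfold Nf
  omega

include hq2 hs in
lemma key3 (k : ℤ) :
    Nf p q r k - Nf p q r (k - q) =
      if 0 ≤ g p q r k ∧ g p q r k < q then 1 else 0 := by
  have hq0' : (0 : ℤ) < q := hq0 hq2
  have hgg : g p q r (k - q) = g p q r k - 1 := by
    have e1 := gq hs k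
    have e2 := gq hs (k - q)
    have eA : ((k - q) * r) % (q : ℤ) = (k * r) % q := by
      have h : (k - q) * (r : ℤ) = k * r + q * (-r) := by ring
      rw [h, Int.add_mul_emod_self_left]
    rw [eA] at e2
    have : (q : ℤ) * g p q r (k - q) = q * (g p q r k - 1) := by linear_combination e2 - e1
    exact mul_left_cancel₀ (ne_of_gt hq0') this
  unfold Nf
  rw [hgg]
  split <;> omega

lemma tele (k : ℤ) : ∀ n : ℕ,
    ∑ t ∈ Finset.range n, (Nf p q r (k - t) - Nf p q r (k - t - 1)) =
      Nf p q r k - Nf p q r (k - n)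
  | 0 => by simp
  | n + 1 => by
    rw [Finset.sum_range_succ, tele k n]
    have h : k - ((n : ℤ) + 1) = k - n - 1 := by ring
    push_cast
    rw [h]
    ring

include hq2 hs in
lemma sol_iff (k i j : ℕ) (hi : i < q) (hj : j < q) :
    p * i + q * j = k ↔ ((i : ℤ) = ((k : ℤ) * r) % q ∧ (j : ℤ) = g p q r (k : ℤ)) := by
  have hq0' : (0 : ℤ) < q := hq0 hq2
  have hZ : (p : ℤ) * r = q * s + 1 := by exact_mod_cast hs
  constructor
  · intro h
    have hk : (p : ℤ) * i + q * j = k := by exact_mod_cast h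
    have hiA : ((k : ℤ) * r) % q = i := by
      have h1 : (k : ℤ) * r = i + q * (i * s + j * r) := by
        linear_combination (i : ℤ) * hZ + (r : ℤ) * hk.symm
      rw [h1, Int.add_mul_emod_self_left,
        Int.emod_eq_of_lt (by positivity) (by exact_mod_cast hi)]
    refine ⟨hiA.symm, ?_⟩
    have e := gq hs (k : ℤ)
    rw [hiA] at e
    have : (q : ℤ) * g p q r k = q * j := by linear_combination e - hk
    exact (mul_left_cancel₀ (ne_of_gt hq0') this).symm
  · rintro ⟨h1, h2⟩
    have e := gq hs (k : ℤ)
    rw [← h1] at e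
    have : (p : ℤ) * i + q * j = k := by rw [h2]; linear_combination e
    exact_mod_cast this

include hp2 hq2 hs in
lemma coeff_Qp (m : ℕ) : (Qp p q r).coeff m = cf p q r m := by
  unfold Qp
  rw [finset_sum_coeff]
  simp only [coeff_C_mul, coeff_X_pow, mul_ite, mul_one, mul_zero]
  rw [Finset.sum_ite_eq (Finset.range ((p + q) * q)) m (fun k => cf p q r k)]
  split
  · rfl
  · next h =>
    exact (cf_zero hp2 hq2 hs m (by simpa using h)).symm

end

end Stmt9Aux

open Stmt9Aux in
theorem stmt_9 (p q : ℕ) (hp : p.Prime) (hq : q.Prime) (hpq : p ≠ q) :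
    1 ≤ Height (cyclotomic (p * q) ℤ * cyclotomic (q ^ 2) ℤ) ∧
    Height (cyclotomic (p * q) ℤ * cyclotomic (q ^ 2) ℤ) ≤ p - 1 := by
  haveI : Fact q.Prime := ⟨hq⟩
  haveI : Fact p.Prime := ⟨hp⟩
  have hp2 : 2 ≤ p := hp.two_le
  have hq2 : 2 ≤ q := hq.two_le
  have hndvd : ¬ p ∣ q := fun h => hpq ((Nat.prime_dvd_prime_iff_eq hp hq).mp h)
  have hco : Nat.Coprime p q := (Nat.coprime_primes hp hq).mpr hpq
  -- the inverse of p mod q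
  set u := ZMod.unitOfCoprime p hco with hu
  set r := ((u⁻¹ : (ZMod q)ˣ) : ZMod q).val with hrdef
  have hrq : r < q := ZMod.val_lt _
  have hpr : p * r ≡ 1 [MOD q] := by
    have h1 : ((p * r : ℕ) : ZMod q) = ((1 : ℕ) : ZMod q) := by
      push_cast
      rw [hrdef, ZMod.natCast_val, ZMod.cast_id]
      rw [← ZMod.coe_unitOfCoprime p hco, ← hu, ← Units.val_mul, mul_inv_cancel, Units.val_one]
    exact (ZMod.natCast_eq_natCast_iff _ _ _).mp h1
  have hr1 : 1 ≤ r := by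
    rcases Nat.eq_zero_or_pos r with h | h
    · exfalso
      rw [h, mul_zero] at hpr
      have : (0 : ℕ) % q = 1 % q := hpr
      rw [Nat.zero_mod, Nat.mod_eq_of_lt (by omega)] at this
      omega
    · exact h
  have hpr1 : 1 ≤ p * r := Nat.mul_pos (by omega) (by omega)
  obtain ⟨s, hs'⟩ : q ∣ p * r - 1 := (Nat.modEq_iff_dvd' hpr1).mp hpr.symm
  have hs : p * r = q * s + 1 := by omega
  have hs1 : 1 ≤ s := by
    rcases Nat.eq_zero_or_pos s with h | h
    · exfalso
      rw [h, mul_zero] at hs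
      nlinarith
    · exact h
  have hsp : s < p := by
    have h1 : q * s < p * q := by
      have : p * r < p * q := by nlinarith
      omega
    rw [mul_comm p q] at h1
    exact lt_of_mul_lt_mul_left h1 (by omega)
  -- the key identity
  have hQΦ : Qp p q r * cyclotomic q ℤ =
      expand ℤ p (cyclotomic q ℤ) * expand ℤ q (cyclotomic q ℤ) := by
    have hexp : ∀ a : ℕ, (expand ℤ a) (cyclotomic q ℤ) = ∑ i ∈ Finset.range q, X ^ (a * i) := by
      intro a
      rw [cyclotomic_prime ℤ q, map_sum]
      refine Finset.sum_congr rfl fun i _ => ?_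
      rw [map_pow, expand_X, ← pow_mul]
    rw [hexp, hexp, Finset.sum_mul_sum]
    conv_lhs => rw [cyclotomic_prime ℤ q, Finset.mul_sum]
    ext k
    rw [finset_sum_coeff, finset_sum_coeff]
    have hL : ∀ t ∈ Finset.range q,
        (Qp p q r * X ^ t).coeff k = Nf p q r ((k : ℤ) - t) - Nf p q r ((k : ℤ) - t - 1) := by
      intro t _
      rw [coeff_mul_X_pow']
      split
      · next h =>
        rw [coeff_Qp hp2 hq2 hs]
        unfold cf
        have h1 : ((k - t : ℕ) : ℤ) = (k : ℤ) - t := by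
          push_cast [h]; ring
        rw [h1]
      · next h =>
        rw [Nf_neg hq2 hs _ (by omega), Nf_neg hq2 hs _ (by omega)]
        ring
    rw [Finset.sum_congr rfl hL, tele, key3 hq2 hs]
    have hR : ∀ i ∈ Finset.range q,
        (∑ j ∈ Finset.range q, (X : ℤ[X]) ^ (p * i) * X ^ (q * j)).coeff k =
          ∑ j ∈ Finset.range q, (if p * i + q * j = k then (1 : ℤ) else 0) := by
      intro i _
      rw [finset_sum_coeff]
      refine Finset.sum_congr rfl fun j _ => ?_
      rw [← pow_add, coeff_X_pow]
      exact if_congr eq_comm rfl rfl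
    rw [Finset.sum_congr rfl hR]
    by_cases hg : 0 ≤ g p q r (k : ℤ) ∧ g p q r (k : ℤ) < q
    · rw [if_pos hg]
      have hq0' : (0 : ℤ) < q := by exact_mod_cast (by omega : 0 < q)
      set i₀ := (((k : ℤ) * r) % q).toNat with hi₀
      set j₀ := (g p q r (k : ℤ)).toNat with hj₀
      have hA0 : 0 ≤ ((k : ℤ) * r) % q := Int.emod_nonneg _ (ne_of_gt hq0')
      have hAq : ((k : ℤ) * r) % q < q := Int.emod_lt_of_pos _ hq0'
      have hi₀c : (i₀ : ℤ) = ((k : ℤ) * r) % q := Int.toNat_of_nonneg hA0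
      have hj₀c : (j₀ : ℤ) = g p q r (k : ℤ) := Int.toNat_of_nonneg hg.1
      have hi₀q : i₀ < q := by omega
      have hj₀q : j₀ < q := by omega
      have hsol : p * i₀ + q * j₀ = k :=
        (sol_iff hq2 hs k i₀ j₀ hi₀q hj₀q).mpr ⟨hi₀c, hj₀c⟩
      rw [← Finset.sum_product']
      rw [Finset.sum_eq_single_of_mem (i₀, j₀)
        (Finset.mem_product.mpr ⟨Finset.mem_range.mpr hi₀q, Finset.mem_range.mpr hj₀q⟩)]
      · rw [if_pos hsol]
      · rintro ⟨a, b⟩ hab hne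
        rw [if_neg]
        intro hc
        apply hne
        simp only [Finset.mem_product, Finset.mem_range] at hab
        obtain ⟨h1, h2⟩ := (sol_iff hq2 hs k a b hab.1 hab.2).mp hc
        have h3 : a = i₀ := by exact_mod_cast h1.trans hi₀c.symm
        have h4 : b = j₀ := by exact_mod_cast h2.trans hj₀c.symm
        rw [h3, h4]
    · rw [if_neg hg]
      rw [← Finset.sum_product']
      refine (Finset.sum_eq_zero ?_).symm
      rintro ⟨a, b⟩ hab
      rw [if_neg]
      intro hc
      simp only [Finset.mem_product, Finset.mem_range] at hab
      obtain ⟨h1, h2⟩ := (sol_iff hq2 hs k a b hab.1 hab.2).mp hc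
      apply hg
      constructor <;> omega
  have hPQ : cyclotomic (p * q) ℤ * cyclotomic (q ^ 2) ℤ = Qp p q r := by
    have h1 : cyclotomic (q ^ 2) ℤ = expand ℤ q (cyclotomic q ℤ) := by
      rw [cyclotomic_expand_eq_cyclotomic hq (dvd_refl q), sq]
    have h2 : cyclotomic (p * q) ℤ * cyclotomic q ℤ = expand ℤ p (cyclotomic q ℤ) := by
      rw [cyclotomic_expand_eq_cyclotomic_mul hp hndvd, mul_comm q p]
    apply mul_right_cancel₀ (cyclotomic_ne_zero q ℤ)
    calc cyclotomic (p * q) ℤ * cyclotomic (q ^ 2) ℤ * cyclotomic q ℤ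
        = (cyclotomic (p * q) ℤ * cyclotomic q ℤ) * cyclotomic (q ^ 2) ℤ := by ring
      _ = expand ℤ p (cyclotomic q ℤ) * expand ℤ q (cyclotomic q ℤ) := by rw [h2, h1]
      _ = Qp p q r * cyclotomic q ℤ := hQΦ.symm
  constructor
  · -- lower bound
    have hm : (cyclotomic (p * q) ℤ * cyclotomic (q ^ 2) ℤ).Monic :=
      (cyclotomic.monic _ _).mul (cyclotomic.monic _ _)
    have hmem : (cyclotomic (p * q) ℤ * cyclotomic (q ^ 2) ℤ).natDegree ∈
        (cyclotomic (p * q) ℤ * cyclotomic (q ^ 2) ℤ).support := by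
      rw [mem_support_iff, hm.coeff_natDegree]
      exact one_ne_zero
    have h1 := Finset.le_sup
      (f := fun i => ((cyclotomic (p * q) ℤ * cyclotomic (q ^ 2) ℤ).coeff i).natAbs) hmem
    unfold Height
    simpa [hm.coeff_natDegree] using h1
  · rw [hPQ]
    unfold Height
    apply Finset.sup_le
    intro k _
    rw [coeff_Qp hp2 hq2 hs]
    exact cf_bound hp2 hq2 hr1 hrq hs hs1 hsp k
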